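/- arXiv:2510.03084 — 4 statements merged into one kernel-verified Lean document; each statement's English description precedes it below -/
import Mathlib

section
/- Let 0 < α ≤ 1 and let A ⊆ ℕ be a finite nonempty set. If χ : A → ℕ is an α-bounded colouring, then there exist a positive integer r ≤ 4/α and an α-bounded colouring φ : A → {1,...,r} such that φ is a merging of χ. -/
/-- The colouring `χ` of `A` is `α`-bounded: every colour class has size at most `α|A|`. -/
def BddColoring (α : ℝ) (A : Finset ℕ) (χ : ℕ → ℕ) : Prop :=
  ∀ i : ℕ, ((A.filter fun a => χ a = i).card : ℝ) ≤ α * A.card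

open Classical in
lemma merge_step (α : ℝ) (A : Finset ℕ) :
    ∀ m : ℕ, ∀ χ : ℕ → ℕ, (A.image χ).card ≤ m → BddColoring α A χ →
      ∃ φ : ℕ → ℕ, BddColoring α A φ ∧ (∃ π : ℕ → ℕ, ∀ a ∈ A, φ a = π (χ a)) ∧
        ∀ i ∈ A.image φ, ∀ j ∈ A.image φ, i ≠ j →
          ¬(((A.filter fun a => φ a = i).card : ℝ) ≤ α * A.card / 2 ∧
            ((A.filter fun a => φ a = j).card : ℝ) ≤ α * A.card / 2) := by
  intro m
  induction m with
  | zero =>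
      intro χ hcard _hb
      refine ⟨χ, _hb, ⟨id, fun a _ => rfl⟩, ?_⟩
      intro i hi j hj hij
      have : A.image χ = ∅ := Finset.card_eq_zero.mp (Nat.le_zero.mp hcard)
      simp [this] at hi
  | succ m ih =>
      intro χ hcard hb
      by_cases h : ∃ i ∈ A.image χ, ∃ j ∈ A.image χ, i ≠ j ∧
          ((A.filter fun a => χ a = i).card : ℝ) ≤ α * A.card / 2 ∧
          ((A.filter fun a => χ a = j).card : ℝ) ≤ α * A.card / 2
      · obtain ⟨i, hi, j, hj, hij, hsi, hsj⟩ := h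
        set g : ℕ → ℕ := fun c => if c = j then i else c with hg
        have hgi : ∀ c, g c ≠ j := by
          intro c
          by_cases hc : c = j <;> simp [hg, hc, hij]
        have himg : A.image (g ∘ χ) ⊆ (A.image χ).erase j := by
          intro c hc
          obtain ⟨a, ha, hac⟩ := Finset.mem_image.mp hc
          rw [Finset.mem_erase]
          constructor
          · rw [← hac]; exact hgi _
          · by_cases hcj : χ a = j
            · simpa [hg, hcj, ← hac] using hi
            · rw [← hac]; simp only [Function.comp, hg, if_neg hcj]
              exact Finset.mem_image_of_mem _ ha
        have hcard' : (A.image (g ∘ χ)).card ≤ m := by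
          have h1 := Finset.card_le_card himg
          have h2 : ((A.image χ).erase j).card = (A.image χ).card - 1 :=
            Finset.card_erase_of_mem hj
          have h3 : 1 ≤ (A.image χ).card := Finset.card_pos.mpr ⟨j, hj⟩
          omega
        have hb' : BddColoring α A (g ∘ χ) := by
          intro c
          by_cases hc : c = i
          · subst hc
            have heq : (A.filter fun a => (g ∘ χ) a = c)
                = (A.filter fun a => χ a = c ∨ χ a = j) := by
              apply Finset.filter_congr
              intro a _
              simp only [Function.comp, hg, eq_iff_iff]
              constructor
              · intro hh
                by_cases hcj : χ a = j
                · exact Or.inr hcj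
                · rw [if_neg hcj] at hh; exact Or.inl hh
              · rintro (hh | hh)
                · rw [if_neg (by rw [hh]; exact hij)]; exact hh
                · rw [if_pos hh]
            rw [heq, Finset.filter_or]
            calc ((((A.filter fun a => χ a = c)) ∪ (A.filter fun a => χ a = j)).card : ℝ)
                ≤ ((A.filter fun a => χ a = c).card : ℝ)
                  + ((A.filter fun a => χ a = j).card : ℝ) := by
                  exact_mod_cast Finset.card_union_le _ _
              _ ≤ α * A.card / 2 + α * A.card / 2 := add_le_add hsi hsj
              _ = α * A.card := by ring
          · have hsub : (A.filter fun a => (g ∘ χ) a = c) ⊆ (A.filter fun a => χ a = c) := by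
              intro a ha
              rw [Finset.mem_filter] at ha ⊢
              refine ⟨ha.1, ?_⟩
              have := ha.2
              simp only [Function.comp, hg] at this
              by_cases hcj : χ a = j
              · rw [if_pos hcj] at this; exact absurd this.symm hc
              · rwa [if_neg hcj] at this
            calc ((A.filter fun a => (g ∘ χ) a = c).card : ℝ)
                ≤ ((A.filter fun a => χ a = c).card : ℝ) := by
                  exact_mod_cast Finset.card_le_card hsub
              _ ≤ α * A.card := hb c
        obtain ⟨φ, hφb, ⟨π', hπ'⟩, hpair⟩ := ih (g ∘ χ) hcard' hb'
        exact ⟨φ, hφb, ⟨π' ∘ g, fun a ha => hπ' a ha⟩, hpair⟩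
      · push_neg at h
        refine ⟨χ, hb, ⟨id, fun a _ => rfl⟩, ?_⟩
        intro i hi j hj hij ⟨h1, h2⟩
        exact absurd h2 (not_le.mpr (h i hi j hj hij h1))

theorem colour_merging :
    ∀ α : ℝ, 0 < α → α ≤ 1 → ∀ A : Finset ℕ, A.Nonempty →
      ∀ χ : ℕ → ℕ, BddColoring α A χ →
        ∃ r : ℕ, 0 < r ∧ (r : ℝ) ≤ 4 / α ∧
          ∃ φ : ℕ → ℕ, (∀ a ∈ A, φ a ∈ Finset.Icc 1 r) ∧ BddColoring α A φ ∧
            ∃ π : ℕ → ℕ, ∀ a ∈ A, φ a = π (χ a) := by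
  classical
  intro α hα hα1 A hA χ hb
  obtain ⟨φ, hφb, ⟨π, hπ⟩, hpair⟩ := merge_step α A (A.image χ).card χ le_rfl hb
  set n : ℕ := A.card with hn
  have hn0 : 0 < (n : ℝ) := by exact_mod_cast Finset.card_pos.mpr hA
  set s : Finset ℕ := A.image φ with hs
  set m : ℕ := s.card with hm
  have hm0 : 0 < m := Finset.card_pos.mpr (hA.image φ)
  -- bound m ≤ 2/α + 1
  set T : Finset ℕ := s.filter (fun i => α * n / 2 < ((A.filter fun a => φ a = i).card : ℝ))
    with hT
  have hsdT : (s \ T).card ≤ 1 := by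
    by_contra hcon
    push_neg at hcon
    obtain ⟨i, hi, j, hj, hij⟩ := Finset.one_lt_card.mp hcon
    rw [Finset.mem_sdiff, hT, Finset.mem_filter, not_and] at hi hj
    have hi' := not_lt.mp fun hh => hi.2 hi.1 hh
    have hj' := not_lt.mp fun hh => hj.2 hj.1 hh
    exact hpair i hi.1 j hj.1 hij ⟨hi', hj'⟩
  have hTsum : (T.card : ℝ) * (α * n / 2) ≤ n := by
    have hpart : ∑ i ∈ s, (A.filter fun a => φ a = i).card = n := by
      rw [hn]
      exact (Finset.card_eq_sum_card_fiberwise (fun a ha => Finset.mem_image_of_mem φ ha)).symm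
    have h1 : (T.card : ℝ) * (α * n / 2) ≤ ∑ i ∈ T, ((A.filter fun a => φ a = i).card : ℝ) := by
      have := Finset.card_nsmul_le_sum T (fun i => ((A.filter fun a => φ a = i).card : ℝ))
        (α * n / 2) (fun i hi => by
          rw [hT, Finset.mem_filter] at hi; exact hi.2.le)
      simpa [nsmul_eq_mul] using this
    have h2 : ∑ i ∈ T, ((A.filter fun a => φ a = i).card : ℝ)
        ≤ ∑ i ∈ s, ((A.filter fun a => φ a = i).card : ℝ) := by
      apply Finset.sum_le_sum_of_subset_of_nonneg (Finset.filter_subset _ _)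
      intro i _ _
      positivity
    calc (T.card : ℝ) * (α * n / 2) ≤ _ := h1
      _ ≤ _ := h2
      _ = n := by exact_mod_cast hpart
  have hTcard : (T.card : ℝ) ≤ 2 / α := by
    rw [le_div_iff₀ hα]
    nlinarith [hTsum, hn0]
  have hmT : m ≤ T.card + 1 := by
    have h1 : (s \ T).card + T.card = s.card :=
      Finset.card_sdiff_add_card_eq_card (by rw [hT]; exact Finset.filter_subset _ _)
    omega
  have hmbound : (m : ℝ) ≤ 4 / α := by
    have h1 : (m : ℝ) ≤ (T.card : ℝ) + 1 := by exact_mod_cast hmT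
    have h2 : (1:ℝ) ≤ 2 / α := by
      rw [le_div_iff₀ hα]; linarith
    have : (m : ℝ) ≤ 2 / α + 2 / α := by linarith [hTcard]
    calc (m:ℝ) ≤ 2 / α + 2 / α := this
      _ = 4 / α := by ring
  -- relabelling
  set e := s.orderIsoOfFin hm.symm with he
  set σ : ℕ → ℕ := fun c => if h : c ∈ s then ((e.symm ⟨c, h⟩ : Fin m) : ℕ) + 1 else 1 with hσ
  have hσmem : ∀ c ∈ s, σ c ∈ Finset.Icc 1 m := by
    intro c hc
    rw [hσ]
    simp only [dif_pos hc]
    rw [Finset.mem_Icc]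
    exact ⟨Nat.le_add_left 1 _, (e.symm ⟨c, hc⟩).isLt⟩
  have hσinj : ∀ c ∈ s, ∀ c' ∈ s, σ c = σ c' → c = c' := by
    intro c hc c' hc' hh
    rw [hσ] at hh
    simp only [dif_pos hc, dif_pos hc'] at hh
    have : e.symm ⟨c, hc⟩ = e.symm ⟨c', hc'⟩ := by
      apply Fin.ext; omega
    have := e.symm.injective this
    exact Subtype.ext_iff.mp this
  refine ⟨m, hm0, hmbound, σ ∘ φ, ?_, ?_, σ ∘ π, ?_⟩
  · intro a ha
    exact hσmem _ (Finset.mem_image_of_mem φ ha)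
  · intro k
    by_cases hne : (A.filter fun a => (σ ∘ φ) a = k).Nonempty
    · obtain ⟨a₀, ha₀⟩ := hne
      rw [Finset.mem_filter] at ha₀
      have hsub : (A.filter fun a => (σ ∘ φ) a = k) ⊆ (A.filter fun a => φ a = φ a₀) := by
        intro a ha
        rw [Finset.mem_filter] at ha ⊢
        refine ⟨ha.1, ?_⟩
        exact hσinj _ (Finset.mem_image_of_mem φ ha.1) _ (Finset.mem_image_of_mem φ ha₀.1)
          (ha.2.trans ha₀.2.symm)
      calc ((A.filter fun a => (σ ∘ φ) a = k).card : ℝ)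
          ≤ ((A.filter fun a => φ a = φ a₀).card : ℝ) := by
            exact_mod_cast Finset.card_le_card hsub
        _ ≤ α * A.card := hφb _
    · rw [Finset.not_nonempty_iff_eq_empty] at hne
      rw [hne]
      simp only [Finset.card_empty, Nat.cast_zero]
      exact mul_nonneg hα.le (Nat.cast_nonneg _)
  · intro a ha
    exact congrArg σ (hπ a ha)
end

section
/- For all integers r ≥ k ≥ 3 there exists a constant c > 0 such that for every n ≥ 1 and every 1 ≤ ℓ ≤ k, the rainbow hypergraph R = R(n,k,r) satisfies Δ_ℓ(R) ≤ c · n^{-(ℓ-1)/(k-1)} · e(R)/v(R), where v(R) = rn is the number of vertices and e(R) the number of edges of R. -/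
/-- `e` is an edge of the rainbow hypergraph `R(n,k,r)`: a set
`{(ω₁,a₁), …, (ω_k,a_k)}` where `(a₁,…,a_k)` is a `k`-AP contained in `{1,…,n}`
and the colours `ω₁,…,ω_k ∈ {1,…,r}` are pairwise distinct. -/
def RainbowEdge (n k r : ℕ) (e : Finset (ℕ × ℕ)) : Prop :=
  ∃ (a d : ℕ) (ω : Fin k → ℕ), 1 ≤ d ∧ Function.Injective ω ∧
    (∀ i : Fin k, ω i ∈ Finset.Icc 1 r) ∧
    (∀ i : Fin k, a + (i : ℕ) * d ∈ Finset.Icc 1 n) ∧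
    e = Finset.image (fun i : Fin k => (ω i, a + (i : ℕ) * d)) Finset.univ

open scoped Classical in
/-- The edge set of the rainbow hypergraph `R(n,k,r)`, whose vertex set is
`{1,…,r} × {1,…,n}`. -/
noncomputable def rainbowHG (n k r : ℕ) : Finset (Finset (ℕ × ℕ)) :=
  (Finset.Icc 1 r ×ˢ Finset.Icc 1 n).powerset.filter (RainbowEdge n k r)

lemma rainbow_empty {n k r : ℕ} (hk : 3 ≤ k) (hn : n < k) : rainbowHG n k r = ∅ := by
  classical
  ext e
  simp only [rainbowHG, Finset.mem_filter, Finset.mem_powerset, Finset.notMem_empty,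
    iff_false, not_and]
  rintro hsub ⟨a, d, ω, hd, hinj, hω, hpos, he⟩
  have h0 := hpos ⟨0, by omega⟩
  have h1 := hpos ⟨k - 1, by omega⟩
  simp only [Finset.mem_Icc] at h0 h1
  have : k - 1 ≤ (k - 1) * d := Nat.le_mul_of_pos_right _ hd
  omega

lemma deg_one {n k r : ℕ} (hk : 3 ≤ k) (c x : ℕ) :
    ((rainbowHG n k r).filter fun e => (c, x) ∈ e).card ≤ k * n * r ^ k := by
  classical
  have hsurj : Set.SurjOn
      (fun p : Fin k × ℕ × (Fin k → ℕ) =>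
        Finset.image (fun j : Fin k => (p.2.2 j, (x - (p.1 : ℕ) * p.2.1) + (j : ℕ) * p.2.1))
          Finset.univ)
      ((Finset.univ : Finset (Fin k)) ×ˢ Finset.Icc 1 n ×ˢ
        (Fintype.piFinset fun _ : Fin k => Finset.Icc 1 r) : Finset _)
      ((rainbowHG n k r).filter fun e => (c, x) ∈ e) := by
    intro e he
    simp only [Finset.coe_filter, Set.mem_setOf_eq, Finset.mem_filter] at he
    obtain ⟨heR, hce⟩ := he
    simp only [rainbowHG, Finset.mem_filter, Finset.mem_powerset] at heR
    obtain ⟨hsub, a, d, ω, hd, hinj, hω, hpos, rfl⟩ := heR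
    simp only [Finset.mem_image, Finset.mem_univ, true_and] at hce
    obtain ⟨i₀, hi₀⟩ := hce
    have ha : a + (i₀ : ℕ) * d = x := congrArg Prod.snd hi₀
    refine ⟨(i₀, d, ω), ?_, ?_⟩
    · simp only [Finset.coe_product, Set.mem_prod, Finset.mem_coe, Finset.mem_univ, true_and,
        Finset.mem_Icc, Fintype.mem_piFinset]
      have h1 := hpos ⟨1, by omega⟩
      have h0 := hpos ⟨0, by omega⟩
      simp only [Finset.mem_Icc] at h1 h0
      exact ⟨⟨hd, by simp at h1 h0; omega⟩, fun i => Finset.mem_Icc.mp (hω i)⟩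
    · have hxa : x - (i₀ : ℕ) * d = a := by omega
      simp only [hxa]
  calc ((rainbowHG n k r).filter fun e => (c, x) ∈ e).card
      ≤ _ := Finset.card_le_card_of_surjOn _ hsurj
    _ = k * n * r ^ k := by
        simp [Finset.card_product, Fintype.card_piFinset, Nat.card_Icc, Nat.mul_assoc]

lemma deg_two {n k r : ℕ} (hk : 3 ≤ k) (c₁ c₂ x y : ℕ) (hxy : x < y) :
    ((rainbowHG n k r).filter fun e => (c₁, x) ∈ e ∧ (c₂, y) ∈ e).card ≤ k * k * r ^ k := by
  classical
  have hsurj : Set.SurjOn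
      (fun p : Fin k × Fin k × (Fin k → ℕ) =>
        Finset.image (fun j : Fin k =>
          (p.2.2 j, (x - (p.1 : ℕ) * ((y - x) / ((p.2.1 : ℕ) - (p.1 : ℕ))))
            + (j : ℕ) * ((y - x) / ((p.2.1 : ℕ) - (p.1 : ℕ))))) Finset.univ)
      ((Finset.univ : Finset (Fin k)) ×ˢ (Finset.univ : Finset (Fin k)) ×ˢ
        (Fintype.piFinset fun _ : Fin k => Finset.Icc 1 r) : Finset _)
      ((rainbowHG n k r).filter fun e => (c₁, x) ∈ e ∧ (c₂, y) ∈ e) := by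
    intro e he
    simp only [Finset.coe_filter, Set.mem_setOf_eq, Finset.mem_filter] at he
    obtain ⟨heR, hce1, hce2⟩ := he
    simp only [rainbowHG, Finset.mem_filter, Finset.mem_powerset] at heR
    obtain ⟨hsub, a, d, ω, hd, hinj, hω, hpos, rfl⟩ := heR
    simp only [Finset.mem_image, Finset.mem_univ, true_and] at hce1 hce2
    obtain ⟨i₀, hi₀⟩ := hce1
    obtain ⟨j₀, hj₀⟩ := hce2
    have hax : a + (i₀ : ℕ) * d = x := congrArg Prod.snd hi₀
    have hay : a + (j₀ : ℕ) * d = y := congrArg Prod.snd hj₀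
    have hij : (i₀ : ℕ) < (j₀ : ℕ) := by
      by_contra h
      push_neg at h
      have : (j₀ : ℕ) * d ≤ (i₀ : ℕ) * d := Nat.mul_le_mul_right d h
      omega
    have hsubd : ((j₀ : ℕ) - (i₀ : ℕ)) * d = y - x := by
      rw [Nat.sub_mul]; omega
    have hdiv : (y - x) / ((j₀ : ℕ) - (i₀ : ℕ)) = d := by
      rw [← hsubd, Nat.mul_div_cancel_left _ (by omega)]
    refine ⟨(i₀, j₀, ω), ?_, ?_⟩
    · simp only [Finset.coe_product, Set.mem_prod, Finset.mem_coe, Finset.mem_univ, true_and,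
        Fintype.mem_piFinset]
      exact fun i => hω i
    · simp only [hdiv]
      have hxa : x - (i₀ : ℕ) * d = a := by omega
      simp only [hxa]
  calc ((rainbowHG n k r).filter fun e => (c₁, x) ∈ e ∧ (c₂, y) ∈ e).card
      ≤ _ := Finset.card_le_card_of_surjOn _ hsurj
    _ = k * k * r ^ k := by
        simp [Finset.card_product, Fintype.card_piFinset, Nat.card_Icc, Nat.mul_assoc]

lemma same_pos {n k r : ℕ} {e : Finset (ℕ × ℕ)} (he : e ∈ rainbowHG n k r)
    {c₁ c₂ x : ℕ} (h1 : (c₁, x) ∈ e) (h2 : (c₂, x) ∈ e) : c₁ = c₂ := by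
  classical
  simp only [rainbowHG, Finset.mem_filter, Finset.mem_powerset] at he
  obtain ⟨hsub, a, d, ω, hd, hinj, hω, hpos, rfl⟩ := he
  simp only [Finset.mem_image, Finset.mem_univ, true_and] at h1 h2
  obtain ⟨i, hi⟩ := h1
  obtain ⟨j, hj⟩ := h2
  have hxi : a + (i : ℕ) * d = x := congrArg Prod.snd hi
  have hxj : a + (j : ℕ) * d = x := congrArg Prod.snd hj
  have : (i : ℕ) * d = (j : ℕ) * d := by omega
  have hij : i = j := by
    have := Nat.eq_of_mul_eq_mul_right hd this
    exact Fin.ext this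
  have := congrArg Prod.fst hi
  have := congrArg Prod.fst hj
  simp_all

lemma inj_lower {n k r : ℕ} (hk : 3 ≤ k) (hkr : k ≤ r) {A D : ℕ}
    (hD : 1 ≤ D) (hA : 1 ≤ A) (hle : A + (k - 1) * D ≤ n) :
    A * D ≤ (rainbowHG n k r).card := by
  classical
  have hmaps : ∀ p ∈ Finset.Icc 1 A ×ˢ Finset.Icc 1 D,
      (Finset.image (fun i : Fin k => ((i : ℕ) + 1, p.1 + (i : ℕ) * p.2)) Finset.univ)
        ∈ rainbowHG n k r := by
    rintro ⟨a, d⟩ hp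
    simp only [Finset.mem_product, Finset.mem_Icc] at hp
    obtain ⟨⟨ha1, ha2⟩, hd1, hd2⟩ := hp
    have hposn : ∀ i : Fin k, a + (i : ℕ) * d ∈ Finset.Icc 1 n := by
      intro i
      simp only [Finset.mem_Icc]
      constructor
      · omega
      · have h1 : (i : ℕ) * d ≤ (k - 1) * D :=
          Nat.mul_le_mul (by omega) hd2
        omega
    simp only [rainbowHG, Finset.mem_filter, Finset.mem_powerset]
    constructor
    · intro q hq
      simp only [Finset.mem_image, Finset.mem_univ, true_and] at hq
      obtain ⟨i, rfl⟩ := hq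
      simp only [Finset.mem_product, Finset.mem_Icc]
      have := hposn i
      simp only [Finset.mem_Icc] at this
      refine ⟨⟨by omega, by have := i.isLt; omega⟩, this⟩
    · exact ⟨a, d, fun i => (i : ℕ) + 1, by omega,
        fun i j hij => Fin.ext (Nat.succ_injective hij),
        fun i => by simp only [Finset.mem_Icc]; have := i.isLt; omega,
        hposn, rfl⟩
  have hinj : Set.InjOn
      (fun p : ℕ × ℕ =>
        Finset.image (fun i : Fin k => ((i : ℕ) + 1, p.1 + (i : ℕ) * p.2)) Finset.univ)
      (Finset.Icc 1 A ×ˢ Finset.Icc 1 D : Finset (ℕ × ℕ)) := by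
    rintro ⟨a, d⟩ _ ⟨a', d'⟩ _ h
    simp only at h
    have h0 : ((1 : ℕ), a) ∈ Finset.image
        (fun i : Fin k => ((i : ℕ) + 1, a + (i : ℕ) * d)) Finset.univ := by
      refine Finset.mem_image.mpr ⟨⟨0, by omega⟩, Finset.mem_univ _, by simp⟩
    rw [h] at h0
    simp only [Finset.mem_image, Finset.mem_univ, true_and] at h0
    obtain ⟨i, hi⟩ := h0
    have hi1 : (i : ℕ) + 1 = 1 := congrArg Prod.fst hi
    have hi2 : a' + (i : ℕ) * d' = a := congrArg Prod.snd hi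
    have haa : a = a' := by
      have : (i : ℕ) = 0 := by omega
      rw [this] at hi2; omega
    have h1 : ((2 : ℕ), a + d) ∈ Finset.image
        (fun i : Fin k => ((i : ℕ) + 1, a + (i : ℕ) * d)) Finset.univ := by
      refine Finset.mem_image.mpr ⟨⟨1, by omega⟩, Finset.mem_univ _, by simp⟩
    rw [h] at h1
    simp only [Finset.mem_image, Finset.mem_univ, true_and] at h1
    obtain ⟨j, hj⟩ := h1
    have hj1 : (j : ℕ) + 1 = 2 := congrArg Prod.fst hj
    have hj2 : a' + (j : ℕ) * d' = a + d := congrArg Prod.snd hj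
    have hdd : d = d' := by
      have : (j : ℕ) = 1 := by omega
      rw [this] at hj2; omega
    simp [haa, hdd]
  have := Finset.card_le_card_of_injOn _ hmaps hinj
  simpa [Nat.card_Icc] using this

lemma lower_bound {n k r : ℕ} (hk : 3 ≤ k) (hkr : k ≤ r) (hn : k ≤ n) :
    n ^ 2 ≤ 8 * k ^ 2 * (rainbowHG n k r).card := by
  by_cases h2k : n < 2 * k
  · have h1 : 1 * 1 ≤ (rainbowHG n k r).card :=
      inj_lower hk hkr le_rfl le_rfl (by omega)
    have hc1 : 1 ≤ (rainbowHG n k r).card := by omega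
    have hnn : n ≤ 2 * k := by omega
    calc n ^ 2 = n * n := sq n
      _ ≤ (2 * k) * (2 * k) := Nat.mul_le_mul hnn hnn
      _ = 4 * (k * k) := by ring
      _ ≤ 8 * (k * k) * 1 := by omega
      _ ≤ 8 * (k * k) * (rainbowHG n k r).card := Nat.mul_le_mul_left _ hc1
      _ = 8 * k ^ 2 * (rainbowHG n k r).card := by ring_nf
  · push_neg at h2k
    set D := n / (2 * k) with hDdef
    have hD1 : 1 ≤ D := Nat.one_le_div_iff (by omega) |>.mpr h2k
    have hkd : k * D = (k - 1) * D + D := by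
      conv_lhs => rw [show k = (k - 1) + 1 by omega]
      rw [Nat.succ_mul]
    have h1 : D * (2 * k) ≤ n := Nat.div_mul_le_self n (2 * k)
    have h1' : 2 * ((k - 1) * D + D) ≤ n := by
      rw [← hkd]; calc 2 * (k * D) = D * (2 * k) := by ring
        _ ≤ n := h1
    have h2 : 2 * k * D + n % (2 * k) = n := Nat.div_add_mod n (2 * k)
    have h2m : n % (2 * k) < 2 * k := Nat.mod_lt _ (by omega)
    have h2' : n < 2 * ((k - 1) * D + D) + 2 * k := by
      rw [← hkd]
      have : 2 * (k * D) = 2 * k * D := by ring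
      omega
    have hkkd : k ≤ (k - 1) * D + D := by
      rw [← hkd]
      exact Nat.le_mul_of_pos_right _ hD1
    set A := n - (k - 1) * D with hAdef
    have hA1 : 1 ≤ A := by omega
    have hle : A + (k - 1) * D ≤ n := by omega
    have hcard : A * D ≤ (rainbowHG n k r).card := inj_lower hk hkr hD1 hA1 hle
    have h4 : n ≤ 4 * ((k - 1) * D + D) := by omega
    have h2A : n ≤ 2 * A := by omega
    have hfin : 8 * k ≤ 8 * k ^ 2 := by nlinarith
    calc n ^ 2 = n * n := sq n
      _ ≤ (4 * ((k - 1) * D + D)) * (2 * A) := Nat.mul_le_mul h4 h2A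
      _ = (8 * k) * (A * D) := by rw [← hkd]; ring
      _ ≤ (8 * k ^ 2) * (rainbowHG n k r).card := Nat.mul_le_mul hfin hcard

theorem rainbow_hypergraph_degree_bounds :
    ∀ r k : ℕ, 3 ≤ k → k ≤ r → ∃ c : ℝ, 0 < c ∧
      ∀ n : ℕ, 1 ≤ n → ∀ ℓ : ℕ, 1 ≤ ℓ → ℓ ≤ k →
        ∀ S : Finset (ℕ × ℕ), S ⊆ Finset.Icc 1 r ×ˢ Finset.Icc 1 n → S.card = ℓ →
          (((rainbowHG n k r).filter fun e => S ⊆ e).card : ℝ) ≤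
            c * (n : ℝ) ^ (-(((ℓ : ℝ) - 1) / ((k : ℝ) - 1))) *
              ((rainbowHG n k r).card : ℝ) / ((r : ℝ) * n) := by
  classical
  intro r k hk hkr
  have hk0 : (0:ℝ) < k := by exact_mod_cast (by omega : 0 < k)
  have hr0 : (0:ℝ) < r := by exact_mod_cast (by omega : 0 < r)
  refine ⟨8 * (k:ℝ)^4 * (r:ℝ)^(k+1), by positivity, ?_⟩
  intro n hn ℓ hℓ1 hℓk S hSsub hScard
  by_cases hnk : n < k
  · rw [rainbow_empty hk hnk]
    simp
  push_neg at hnk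
  have hn0 : (0:ℝ) < n := by exact_mod_cast (by omega : 0 < n)
  have hk1 : (1:ℝ) < k := by exact_mod_cast (by omega : 1 < k)
  set t : ℝ := ((ℓ:ℝ) - 1) / ((k:ℝ) - 1) with ht
  have hℓ1' : (1:ℝ) ≤ (ℓ:ℝ) := by exact_mod_cast hℓ1
  have hℓk' : (ℓ:ℝ) ≤ (k:ℝ) := by exact_mod_cast hℓk
  have ht0 : 0 ≤ t := div_nonneg (by linarith) (by linarith)
  have ht1 : t ≤ 1 := by
    rw [ht, div_le_one (by linarith)]
    linarith
  -- LHS bound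
  have hL : (((rainbowHG n k r).filter fun e => S ⊆ e).card : ℝ) ≤
      (k:ℝ)^2 * (r:ℝ)^k * (n:ℝ) ^ ((1:ℝ) - t) := by
    have hone : (1:ℝ) ≤ (n:ℝ) ^ ((1:ℝ) - t) := by
      calc (1:ℝ) = (n:ℝ) ^ (0:ℝ) := (Real.rpow_zero _).symm
        _ ≤ (n:ℝ) ^ ((1:ℝ) - t) :=
          Real.rpow_le_rpow_of_exponent_le (by exact_mod_cast hn) (by linarith)
    rcases eq_or_lt_of_le hℓ1 with hℓeq | hℓ2
    · -- ℓ = 1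
      obtain ⟨v, hv⟩ := Finset.card_eq_one.mp (by rw [hScard, ← hℓeq])
      have hsubf : ((rainbowHG n k r).filter fun e => S ⊆ e) ⊆
          ((rainbowHG n k r).filter fun e => (v.1, v.2) ∈ e) := by
        intro e he
        rw [Finset.mem_filter] at he ⊢
        refine ⟨he.1, ?_⟩
        have := he.2
        rw [hv] at this
        simpa using Finset.singleton_subset_iff.mp this
      have hcard := (Finset.card_le_card hsubf).trans (deg_one hk v.1 v.2)
      have hteq : t = 0 := by
        rw [ht, ← hℓeq]
        norm_num
      rw [hteq]
      norm_num [Real.rpow_one]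
      have hkk : (k:ℝ) * ((n:ℝ) * (r:ℝ)^k) ≤ (k:ℝ)^2 * ((n:ℝ) * (r:ℝ)^k) :=
        mul_le_mul_of_nonneg_right (by nlinarith) (by positivity)
      calc (((rainbowHG n k r).filter fun e => S ⊆ e).card : ℝ)
          ≤ (k:ℝ) * n * (r:ℝ)^k := by exact_mod_cast hcard
        _ = (k:ℝ) * ((n:ℝ) * (r:ℝ)^k) := by ring
        _ ≤ (k:ℝ)^2 * ((n:ℝ) * (r:ℝ)^k) := hkk
        _ = (k:ℝ)^2 * (r:ℝ)^k * n := by ring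
    · -- 2 ≤ ℓ
      obtain ⟨p, q, hp, hq, hpq⟩ := Finset.one_lt_card_iff.mp (by rw [hScard]; omega)
      have hbound : ∀ c₁ c₂ x y : ℕ, x < y → (c₁, x) ∈ S → (c₂, y) ∈ S →
          (((rainbowHG n k r).filter fun e => S ⊆ e).card : ℝ) ≤
            (k:ℝ)^2 * (r:ℝ)^k * (n:ℝ) ^ ((1:ℝ) - t) := by
        intro c₁ c₂ x y hxy hc1S hc2S
        have hsubf : ((rainbowHG n k r).filter fun e => S ⊆ e) ⊆
            ((rainbowHG n k r).filter fun e => (c₁, x) ∈ e ∧ (c₂, y) ∈ e) := by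
          intro e he
          rw [Finset.mem_filter] at he ⊢
          exact ⟨he.1, he.2 hc1S, he.2 hc2S⟩
        have hcard := (Finset.card_le_card hsubf).trans (deg_two hk c₁ c₂ x y hxy)
        calc (((rainbowHG n k r).filter fun e => S ⊆ e).card : ℝ)
            ≤ (k:ℝ) * k * (r:ℝ)^k := by exact_mod_cast hcard
          _ = (k:ℝ)^2 * (r:ℝ)^k * 1 := by ring
          _ ≤ (k:ℝ)^2 * (r:ℝ)^k * (n:ℝ) ^ ((1:ℝ) - t) := by
              have : (0:ℝ) ≤ (k:ℝ)^2 * (r:ℝ)^k := by positivity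
              nlinarith
      rcases lt_trichotomy p.2 q.2 with hlt | heq | hgt
      · exact hbound p.1 q.1 p.2 q.2 hlt (by simpa using hp) (by simpa using hq)
      · -- same position, distinct colours: filter is empty
        have hfe : ((rainbowHG n k r).filter fun e => S ⊆ e) = ∅ := by
          rw [Finset.filter_eq_empty_iff]
          intro e he hSe
          have h1 : (p.1, p.2) ∈ e := hSe (by simpa using hp)
          have h2 : (q.1, q.2) ∈ e := hSe (by simpa using hq)
          rw [heq] at h1
          have := same_pos he h1 h2
          exact hpq (Prod.ext this heq)
        rw [hfe]
        simp only [Finset.card_empty, Nat.cast_zero]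
        positivity
      · exact hbound q.1 p.1 q.2 p.2 hgt (by simpa using hq) (by simpa using hp)
  -- RHS bound
  have hE : (n:ℝ)^2 ≤ 8 * (k:ℝ)^2 * ((rainbowHG n k r).card : ℝ) := by
    exact_mod_cast lower_bound hk hkr hnk
  have hEdiv : (n:ℝ)^2 / (8 * (k:ℝ)^2) ≤ ((rainbowHG n k r).card : ℝ) := by
    rw [div_le_iff₀ (by positivity)]
    linarith
  have hsplit : (n:ℝ) ^ ((1:ℝ) - t) = (n:ℝ) ^ (-t) * n := by
    rw [show (1:ℝ) - t = -t + 1 by ring, Real.rpow_add hn0, Real.rpow_one]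
  have hrw : 8 * (k:ℝ)^4 * (r:ℝ)^(k+1) * (n:ℝ) ^ (-t) * ((n:ℝ)^2 / (8 * (k:ℝ)^2)) /
      ((r:ℝ) * n) = (k:ℝ)^2 * (r:ℝ)^k * (n:ℝ) ^ ((1:ℝ) - t) := by
    rw [hsplit, pow_succ]
    field_simp
    ring
  have hmono : 8 * (k:ℝ)^4 * (r:ℝ)^(k+1) * (n:ℝ) ^ (-t) * ((n:ℝ)^2 / (8 * (k:ℝ)^2)) /
      ((r:ℝ) * n) ≤ 8 * (k:ℝ)^4 * (r:ℝ)^(k+1) * (n:ℝ) ^ (-t) *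
      ((rainbowHG n k r).card : ℝ) / ((r:ℝ) * n) := by
    gcongr
    all_goals first | exact hEdiv | positivity
  calc (((rainbowHG n k r).filter fun e => S ⊆ e).card : ℝ)
      ≤ (k:ℝ)^2 * (r:ℝ)^k * (n:ℝ) ^ ((1:ℝ) - t) := hL
    _ = _ := hrw.symm
    _ ≤ _ := hmono
end

section
/- Let k ≥ 2 and ℓ ≥ 3 be integers. Every minimal cycle C of length ℓ in a k-uniform hypergraph has exactly (k−1)ℓ vertices, where the vertex set of C is the union of its ℓ edges. -/
/-- The cyclic successor of `i : Fin ℓ`. -/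
def cycSucc {ℓ : ℕ} (i : Fin ℓ) : Fin ℓ := ⟨(i.val + 1) % ℓ, Nat.mod_lt _ i.pos⟩

/-- `(e, v)` is a cycle of length `ℓ ≥ 2` in the hypergraph whose edges are the sets
satisfying `E`: the edges `e 1, …, e ℓ` are distinct, the linking vertices
`v 1, …, v ℓ` are distinct, and `v i ∈ e i ∩ e (i+1)` cyclically. -/
def IsCycle {V : Type} (E : Finset V → Prop) {ℓ : ℕ}
    (e : Fin ℓ → Finset V) (v : Fin ℓ → V) : Prop :=
  2 ≤ ℓ ∧ Function.Injective e ∧ Function.Injective v ∧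
    ∀ i : Fin ℓ, E (e i) ∧ v i ∈ e i ∧ v i ∈ e (cycSucc i)

/-- A cycle is minimal if no subset of its edges (with some choice of linking vertices)
forms a cycle of smaller length. -/
def IsMinCycle {V : Type} (E : Finset V → Prop) {ℓ : ℕ}
    (e : Fin ℓ → Finset V) (v : Fin ℓ → V) : Prop :=
  IsCycle E e v ∧ ∀ ℓ' : ℕ, ℓ' < ℓ → ∀ (e' : Fin ℓ' → Finset V) (v' : Fin ℓ' → V),
    ¬ (IsCycle E e' v' ∧ ∀ i : Fin ℓ', ∃ j : Fin ℓ, e' i = e j)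

namespace MCV

variable {ℓ : ℕ}

def shf (i : Fin ℓ) (a : ℕ) : Fin ℓ := ⟨(i.val + a) % ℓ, Nat.mod_lt _ i.pos⟩

lemma shf_inj {i : Fin ℓ} {a b : ℕ} (ha : a < ℓ) (hb : b < ℓ)
    (h : shf i a = shf i b) : a = b := by
  have h' : (i.val + a) % ℓ = (i.val + b) % ℓ := congrArg Fin.val h
  have h2 : a % ℓ = b % ℓ := Nat.ModEq.add_left_cancel' i.val h'
  rwa [Nat.mod_eq_of_lt ha, Nat.mod_eq_of_lt hb] at h2

lemma shf_shf (i : Fin ℓ) (a b : ℕ) : shf (shf i a) b = shf i (a + b) := by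
  apply Fin.ext
  show ((i.val + a) % ℓ + b) % ℓ = (i.val + (a + b)) % ℓ
  rw [Nat.mod_add_mod, Nat.add_assoc]

lemma shf_zero (i : Fin ℓ) : shf i 0 = i := by
  apply Fin.ext
  show (i.val + 0) % ℓ = i.val
  rw [Nat.add_zero, Nat.mod_eq_of_lt i.isLt]

lemma shf_mod (i : Fin ℓ) (a : ℕ) : shf i (a % ℓ) = shf i a := by
  apply Fin.ext
  show (i.val + a % ℓ) % ℓ = (i.val + a) % ℓ
  rw [Nat.add_mod_mod]

lemma cycSucc_eq_shf (i : Fin ℓ) : cycSucc i = shf i 1 := rfl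

def msr (i j : Fin ℓ) : ℕ := (j.val + ℓ - i.val) % ℓ

lemma msr_lt (i j : Fin ℓ) : msr i j < ℓ := Nat.mod_lt _ i.pos

lemma shf_msr (i j : Fin ℓ) : shf i (msr i j) = j := by
  apply Fin.ext
  show (i.val + (j.val + ℓ - i.val) % ℓ) % ℓ = j.val
  rw [Nat.add_mod_mod]
  have h1 : i.val + (j.val + ℓ - i.val) = j.val + ℓ := by
    have := i.isLt; omega
  rw [h1, Nat.add_mod_right, Nat.mod_eq_of_lt j.isLt]

lemma msr_eq_zero {i j : Fin ℓ} : msr i j = 0 ↔ i = j := by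
  constructor
  · intro h
    have h2 := shf_msr i j
    rw [h, shf_zero] at h2
    exact h2
  · rintro rfl
    show (i.val + ℓ - i.val) % ℓ = 0
    have h3 : i.val + ℓ - i.val = ℓ := by omega
    rw [h3, Nat.mod_self]

lemma msr_shf {i : Fin ℓ} {a : ℕ} (ha : a < ℓ) : msr i (shf i a) = a :=
  shf_inj (msr_lt _ _) ha (by rw [shf_msr])

lemma shf_ell (i : Fin ℓ) : shf i ℓ = i := by
  have h := shf_mod i ℓ
  rw [Nat.mod_self] at h
  rw [← h, shf_zero]

lemma msr_add {i j : Fin ℓ} (h : i ≠ j) : msr i j + msr j i = ℓ := by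
  have h1 : shf i (msr i j + msr j i) = i := by
    rw [← shf_shf, shf_msr, shf_msr]
  have h2 : shf i ((msr i j + msr j i) % ℓ) = shf i 0 := by
    rw [shf_mod, h1, shf_zero]
  have h3 : (msr i j + msr j i) % ℓ = 0 := shf_inj (Nat.mod_lt _ i.pos) i.pos h2
  have h4 : msr i j ≠ 0 := fun hh => h (msr_eq_zero.mp hh)
  have h5 : msr i j < ℓ := msr_lt _ _
  have h6 : msr j i < ℓ := msr_lt _ _
  obtain ⟨t, ht⟩ := Nat.dvd_of_mod_eq_zero h3
  match t, ht with
  | 0, ht => omega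
  | 1, ht => omega
  | (n+2), ht =>
    have hm : ℓ * 2 ≤ ℓ * (n + 2) := Nat.mul_le_mul_left _ (by omega)
    omega

lemma cycSucc_inj {i j : Fin ℓ} (h : cycSucc i = cycSucc j) : i = j := by
  have h' : (i.val + 1) % ℓ = (j.val + 1) % ℓ := congrArg Fin.val h
  have h2 : i.val % ℓ = j.val % ℓ := Nat.ModEq.add_right_cancel' 1 h'
  apply Fin.ext
  rwa [Nat.mod_eq_of_lt i.isLt, Nat.mod_eq_of_lt j.isLt] at h2

lemma cycSucc_ne (hℓ : 2 ≤ ℓ) (i : Fin ℓ) : cycSucc i ≠ i := by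
  intro h
  rw [cycSucc_eq_shf] at h
  have h2 : (1 : ℕ) = 0 := shf_inj (by omega) i.pos (h.trans (shf_zero i).symm)
  omega

lemma nobad {V : Type} [DecidableEq V] (E : Finset V → Prop) (hℓ : 3 ≤ ℓ)
    (e : Fin ℓ → Finset V) (v : Fin ℓ → V) (hmin : IsMinCycle E e v) :
    ∀ d (x : V) (i j : Fin ℓ), msr i j = d → x ∈ e i → x ∈ e j → i ≠ j →
      (x = v i ∧ j = cycSucc i) ∨ (x = v j ∧ i = cycSucc j) := by
  obtain ⟨⟨hℓ2, einj, vinj, hcond⟩, hminml⟩ := hmin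
  intro d
  induction d using Nat.strong_induction_on with
  | _ d IH =>
  intro x i j hd hxi hxj hij
  have hd0 : 1 ≤ d := by
    by_contra h
    have hz : msr i j = 0 := by omega
    exact hij (msr_eq_zero.mp hz)
  by_cases hrev : msr j i < d
  · rcases IH _ hrev x j i rfl hxj hxi (Ne.symm hij) with ⟨h1, h2⟩ | ⟨h1, h2⟩
    · exact Or.inr ⟨h1, h2⟩
    · exact Or.inl ⟨h1, h2⟩
  · have hsum := msr_add hij
    have h2d : 2 * d ≤ ℓ := by omega
    have hdlt : d + 1 < ℓ := by omega
    by_contra hbad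
    push_neg at hbad
    obtain ⟨hA, hB⟩ := hbad
    have hj : j = shf i d := by rw [← hd, shf_msr]
    have key : ∀ m : ℕ, m < d → x ≠ v (shf i m) := by
      intro m hm heq
      rcases Nat.eq_zero_or_pos m with hm0 | hm1
      · subst hm0
        rw [shf_zero] at heq
        have hji : j ≠ cycSucc i := hA heq
        have hd2 : 2 ≤ d := by
          rcases Nat.lt_or_ge d 2 with h | h
          · have hd1 : d = 1 := by omega
            subst hd1
            exact absurd (by rw [hj, ← cycSucc_eq_shf]) hji
          · exact h
        have hx1 : x ∈ e (cycSucc i) := by rw [heq]; exact (hcond i).2.2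
        have hmsr : msr (cycSucc i) j = d - 1 := by
          rw [cycSucc_eq_shf, hj]
          have hsplit : shf i d = shf (shf i 1) (d - 1) := by
            rw [shf_shf]; congr 1; omega
          rw [hsplit, msr_shf (by omega)]
        have hne : cycSucc i ≠ j := by
          intro h
          have hz := msr_eq_zero.mpr h
          omega
        rcases IH (d-1) (by omega) x (cycSucc i) j hmsr hx1 hxj hne with ⟨h1, h2⟩ | ⟨h1, h2⟩
        · have hvv : v i = v (cycSucc i) := by rw [← heq]; exact h1
          exact cycSucc_ne (by omega) i (vinj hvv).symm
        · exact hij (cycSucc_inj h2)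
      · have hxm : x ∈ e (shf i m) := by rw [heq]; exact (hcond (shf i m)).2.1
        have hmsr : msr i (shf i m) = m := msr_shf (by omega)
        have hne : i ≠ shf i m := by
          intro h
          have hz := msr_eq_zero.mpr h
          omega
        rcases IH m (by omega) x i (shf i m) hmsr hxi hxm hne with ⟨h1, h2⟩ | ⟨h1, h2⟩
        · have hm1' : m = 1 := shf_inj (by omega) (by omega) (h2.trans (cycSucc_eq_shf i))
          subst hm1'
          have hvv : v i = v (shf i 1) := by rw [← h1]; exact heq
          have hii := vinj hvv
          exact cycSucc_ne (by omega) i (by rw [cycSucc_eq_shf]; exact hii.symm)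
        · have hz : shf i 0 = shf i (m+1) := by
            rw [shf_zero]
            conv_lhs => rw [h2]
            rw [cycSucc_eq_shf, shf_shf]
          have := shf_inj (i := i) i.pos (by omega) hz
          omega
    set e' : Fin (d+1) → Finset V := fun m => e (shf i m.val) with he'
    set v' : Fin (d+1) → V := fun m => if m.val = d then x else v (shf i m.val) with hv'
    refine hminml (d+1) hdlt e' v' ⟨⟨by omega, ?_, ?_, ?_⟩, fun m => ⟨shf i m.val, rfl⟩⟩
    · intro m n h
      apply Fin.ext
      exact shf_inj (Nat.lt_trans m.isLt hdlt) (Nat.lt_trans n.isLt hdlt) (einj h)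
    · intro m n h
      simp only [hv'] at h
      by_cases hm : m.val = d <;> by_cases hn : n.val = d
      · exact Fin.ext (hm.trans hn.symm)
      · rw [if_pos hm, if_neg hn] at h
        exact absurd h (key n.val (by have := n.isLt; omega))
      · rw [if_neg hm, if_pos hn] at h
        exact absurd h.symm (key m.val (by have := m.isLt; omega))
      · rw [if_neg hm, if_neg hn] at h
        exact Fin.ext (shf_inj (Nat.lt_trans m.isLt hdlt) (Nat.lt_trans n.isLt hdlt) (vinj h))
    · intro m
      by_cases hm : m.val = d
      · have hcs : (cycSucc m).val = 0 := by
          show (m.val + 1) % (d+1) = 0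
          rw [hm, Nat.mod_self]
        refine ⟨(hcond _).1, ?_, ?_⟩
        · simp only [hv', he', if_pos hm, hm]
          rw [← hj]
          exact hxj
        · simp only [hv', he', if_pos hm, hcs]
          rw [shf_zero]
          exact hxi
      · have hcs : (cycSucc m).val = m.val + 1 := by
          show (m.val + 1) % (d+1) = m.val + 1
          exact Nat.mod_eq_of_lt (by have := m.isLt; omega)
        refine ⟨(hcond _).1, ?_, ?_⟩
        · simp only [hv', he', if_neg hm]
          exact (hcond _).2.1
        · simp only [hv', he', if_neg hm, hcs]
          have hrw : shf i (m.val + 1) = cycSucc (shf i m.val) := by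
            rw [cycSucc_eq_shf, shf_shf]
          rw [hrw]
          exact (hcond _).2.2

end MCV

theorem minimal_cycle_vertex_count :
    ∀ k ℓ : ℕ, 2 ≤ k → 3 ≤ ℓ → ∀ (V : Type) [inst : DecidableEq V]
      (E : Finset V → Prop), (∀ s : Finset V, E s → s.card = k) →
      ∀ (e : Fin ℓ → Finset V) (v : Fin ℓ → V), IsMinCycle E e v →
        (Finset.univ.biUnion e).card = (k - 1) * ℓ := by
  intro k ℓ hk hℓ V _ E hcard e v hmin
  have hnb := MCV.nobad E hℓ e v hmin
  obtain ⟨⟨hℓ2, einj, vinj, hcond⟩, -⟩ := hmin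
  set pd : Fin ℓ → Fin ℓ := fun i => MCV.shf i (ℓ - 1) with hpd
  have hpdsucc : ∀ i, cycSucc (pd i) = i := by
    intro i
    simp only [hpd]
    rw [MCV.cycSucc_eq_shf, MCV.shf_shf]
    have h1 : ℓ - 1 + 1 = ℓ := by omega
    rw [h1, MCV.shf_ell]
  have hvpd : ∀ i, v (pd i) ∈ e i := by
    intro i
    have h := (hcond (pd i)).2.2
    rwa [hpdsucc] at h
  have hpd_inj : ∀ a b, pd a = pd b → a = b := by
    intro a b h
    have h2 : cycSucc (pd a) = cycSucc (pd b) := by rw [h]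
    rw [hpdsucc, hpdsucc] at h2
    exact h2
  have hpd_ne : ∀ i, pd i ≠ i := by
    intro i h
    have h2 := hpdsucc i
    rw [h] at h2
    exact MCV.cycSucc_ne (by omega) i h2
  set f : Fin ℓ → Finset V := fun i => e i \ {v (pd i)} with hf
  have hunion : Finset.univ.biUnion e = Finset.univ.biUnion f := by
    apply Finset.Subset.antisymm
    · intro x hx
      rw [Finset.mem_biUnion] at hx ⊢
      obtain ⟨i, -, hxi⟩ := hx
      by_cases hxv : x = v (pd i)
      · refine ⟨pd i, Finset.mem_univ _, ?_⟩
        simp only [hf, Finset.mem_sdiff, Finset.mem_singleton]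
        refine ⟨by rw [hxv]; exact (hcond (pd i)).2.1, ?_⟩
        rw [hxv]
        intro hcontra
        have h3 := vinj hcontra
        exact hpd_ne i (hpd_inj _ _ h3).symm
      · exact ⟨i, Finset.mem_univ _,
          by simp only [hf, Finset.mem_sdiff, Finset.mem_singleton]; exact ⟨hxi, hxv⟩⟩
    · intro x hx
      rw [Finset.mem_biUnion] at hx ⊢
      obtain ⟨i, -, hxi⟩ := hx
      simp only [hf, Finset.mem_sdiff] at hxi
      exact ⟨i, Finset.mem_univ _, hxi.1⟩
  have hdisj : ∀ i ∈ Finset.univ, ∀ j ∈ Finset.univ, i ≠ j → Disjoint (f i) (f j) := by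
    intro i _ j _ hij
    rw [Finset.disjoint_left]
    intro x hxi hxj
    simp only [hf, Finset.mem_sdiff, Finset.mem_singleton] at hxi hxj
    rcases hnb (MCV.msr i j) x i j rfl hxi.1 hxj.1 hij with ⟨h1, h2⟩ | ⟨h1, h2⟩
    · apply hxj.2
      rw [h1]
      have h3 : cycSucc (pd j) = cycSucc i := by rw [hpdsucc]; exact h2
      rw [MCV.cycSucc_inj h3]
    · apply hxi.2
      rw [h1]
      have h3 : cycSucc (pd i) = cycSucc j := by rw [hpdsucc]; exact h2
      rw [MCV.cycSucc_inj h3]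
  have hcardf : ∀ i, (f i).card = k - 1 := by
    intro i
    simp only [hf]
    rw [Finset.card_sdiff_of_subset (Finset.singleton_subset_iff.mpr (hvpd i)),
      Finset.card_singleton, hcard _ (hcond i).1]
  rw [hunion, Finset.card_biUnion hdisj]
  simp only [hcardf]
  rw [Finset.sum_const, Finset.card_univ, Fintype.card_fin, smul_eq_mul, Nat.mul_comm]
end

section
/- For all integers k ≥ 3, ℓ ≥ 2 and n ≥ 1, the number of minimal cycles of length ℓ in the k-uniform hypergraph H_{k-AP}({1,...,n}) is at most n^ℓ k^{2ℓ}. -/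
/-- The `k`-AP `{a, a + d, …, a + (k-1)d}` as a finset. -/
def kAPFinset (k a d : ℕ) : Finset ℕ := (Finset.range k).image (fun i => a + i * d)

/-- The edges of the `k`-uniform hypergraph `H_{k-AP}(A)`: the `k`-APs contained in `A`. -/
def kAPEdge (k : ℕ) (A : Finset ℕ) (s : Finset ℕ) : Prop :=
  ∃ a d : ℕ, 1 ≤ d ∧ s = kAPFinset k a d ∧ s ⊆ A

lemma cancel_lemma {a d a' d' p q : ℕ} (hpq : p ≠ q)
    (h1 : a + p*d = a' + p*d') (h2 : a + q*d = a' + q*d') :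
    a = a' ∧ d = d' := by
  have h1' : (a:ℤ) + p*d = a' + p*d' := by exact_mod_cast h1
  have h2' : (a:ℤ) + q*d = a' + q*d' := by exact_mod_cast h2
  have key : ((p:ℤ) - q) * ((d':ℤ) - d) = 0 := by linear_combination h2' - h1'
  have hdd : (d':ℤ) = d := by
    rcases mul_eq_zero.1 key with h | h
    · exfalso
      have : (p:ℤ) = q := by linarith
      exact hpq (by exact_mod_cast this)
    · linarith
  have hd2 : d = d' := by exact_mod_cast hdd.symm
  subst hd2
  exact ⟨by omega, rfl⟩

theorem count_minimal_cycles :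
    ∀ k ℓ n : ℕ, 3 ≤ k → 2 ≤ ℓ →
      Set.ncard {c : (Fin ℓ → Finset ℕ) × (Fin ℓ → ℕ) |
          IsMinCycle (kAPEdge k (Finset.Icc 1 n)) c.1 c.2} ≤
        n ^ ℓ * k ^ (2 * ℓ) := by
  intro k ℓ n hk hℓ
  classical
  haveI : NeZero ℓ := ⟨by omega⟩
  set A := Finset.Icc 1 n with hA
  set S := {c : (Fin ℓ → Finset ℕ) × (Fin ℓ → ℕ) |
      IsMinCycle (kAPEdge k A) c.1 c.2} with hS
  have hone : (1 : Fin ℓ).val = 1 := by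
    rw [Fin.val_one']
    exact Nat.mod_eq_of_lt (by omega)
  have hsucc : ∀ x : Fin ℓ, cycSucc x = x + 1 := by
    intro x
    apply Fin.ext
    rw [Fin.add_def, hone]
    rfl
  have hcyc : ∀ j : Fin ℓ, cycSucc (j - 1) = j := by
    intro j
    rw [hsucc, sub_add_cancel]
  have hne : ∀ j : Fin ℓ, j - 1 ≠ j := by
    intro j h
    have h2 : (1 : Fin ℓ) = 0 := by
      have := congrArg (fun x => j - x) h
      simpa using this.symm
    rw [Fin.ext_iff, hone] at h2
    simp at h2
  have hmem : ∀ c ∈ S, ∀ i : Fin ℓ, ∃ a d p q : ℕ, 1 ≤ d ∧ p < k ∧ q < k ∧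
      c.1 i = kAPFinset k a d ∧ a + p*d = c.2 (i-1) ∧ a + q*d = c.2 i ∧ c.2 i ∈ A := by
    intro c hc i
    obtain ⟨⟨_, hein, hvin, hall⟩, _⟩ := hc
    obtain ⟨a, d, hd, hs, hsub⟩ := (hall i).1
    have hvi : c.2 i ∈ kAPFinset k a d := hs ▸ (hall i).2.1
    have hvp : c.2 (i-1) ∈ kAPFinset k a d := by
      have := (hall (i-1)).2.2
      rw [hcyc i] at this
      exact hs ▸ this
    rw [kAPFinset, Finset.mem_image] at hvi hvp
    obtain ⟨q, hq, hqv⟩ := hvi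
    obtain ⟨p, hp, hpv⟩ := hvp
    rw [Finset.mem_range] at hq hp
    exact ⟨a, d, p, q, hd, hp, hq, hs, hpv, hqv, hsub ((hall i).2.1)⟩
  choose fa fd fp fq hd hp hq he hvp hvq hvA using hmem
  let T := (Fin ℓ → {x // x ∈ A}) × (Fin ℓ → Fin k × Fin k)
  let F : S → T := fun c =>
    (fun i => ⟨c.1.2 i, hvA c.1 c.2 i⟩,
     fun i => (⟨fp c.1 c.2 i, hp c.1 c.2 i⟩, ⟨fq c.1 c.2 i, hq c.1 c.2 i⟩))
  have Finj : Function.Injective F := by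
    intro c c' h
    have h1 := congrArg Prod.fst h
    have h2 := congrArg Prod.snd h
    simp only [F] at h1 h2
    have hv : ∀ i, c.1.2 i = c'.1.2 i := by
      intro i
      exact Subtype.ext_iff.1 (congrFun h1 i)
    have hvfun : c.1.2 = c'.1.2 := funext hv
    have he' : ∀ i, c.1.1 i = c'.1.1 i := by
      intro i
      have hpq := congrFun h2 i
      rw [Prod.mk.injEq] at hpq
      have hP : fp c.1 c.2 i = fp c'.1 c'.2 i := Fin.val_eq_of_eq hpq.1
      have hQ : fq c.1 c.2 i = fq c'.1 c'.2 i := Fin.val_eq_of_eq hpq.2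
      have hinjv : Function.Injective c.1.2 := c.2.1.2.2.1
      have hvne : c.1.2 (i-1) ≠ c.1.2 i := fun hx => hne i (hinjv hx)
      have hpn : fp c.1 c.2 i ≠ fq c.1 c.2 i := by
        intro hx
        apply hvne
        rw [← hvp c.1 c.2 i, ← hvq c.1 c.2 i, hx]
      have e1 : fa c.1 c.2 i + fp c.1 c.2 i * fd c.1 c.2 i
          = fa c'.1 c'.2 i + fp c.1 c.2 i * fd c'.1 c'.2 i := by
        conv_rhs => rw [hP]
        rw [hvp c.1 c.2 i, hvp c'.1 c'.2 i]
        exact hv (i-1)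
      have e2 : fa c.1 c.2 i + fq c.1 c.2 i * fd c.1 c.2 i
          = fa c'.1 c'.2 i + fq c.1 c.2 i * fd c'.1 c'.2 i := by
        conv_rhs => rw [hQ]
        rw [hvq c.1 c.2 i, hvq c'.1 c'.2 i]
        exact hv i
      obtain ⟨ha, hdd⟩ := cancel_lemma hpn e1 e2
      rw [he c.1 c.2 i, he c'.1 c'.2 i, ha, hdd]
    apply Subtype.ext
    exact Prod.ext_iff.2 ⟨funext he', hvfun⟩
  have hcard : Nat.card T = n ^ ℓ * k ^ (2 * ℓ) := by
    have hAcard : Fintype.card {x // x ∈ A} = n := by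
      rw [Fintype.card_coe, hA, Nat.card_Icc]; omega
    rw [Nat.card_eq_fintype_card]
    show Fintype.card ((Fin ℓ → {x // x ∈ A}) × (Fin ℓ → Fin k × Fin k)) = _
    rw [Fintype.card_prod, Fintype.card_fun, Fintype.card_fun, hAcard,
      Fintype.card_prod, Fintype.card_fin, Fintype.card_fin,
      two_mul, pow_add, mul_pow]
  calc Set.ncard S = Nat.card S := (Nat.card_coe_set_eq S).symm
    _ ≤ Nat.card T := Nat.card_le_card_of_injective F Finj
    _ = n ^ ℓ * k ^ (2 * ℓ) := hcard
end
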